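/- Let S ⊆ Z_n and ε > 0 with ε ≤ 1. If Σ_{k ∈ Z_n} (|S ∩ (J+k)| - |S||J|/n)² < ε n³ for every interval J ⊆ Z_n, then D_J(S) < 2 ε^{1/3} n for every interval J ⊆ Z_n. -/

import Mathlib

/-- Discrepancy of `S` in `J` inside `ZMod n`. -/
noncomputable def disc (n : ℕ) (S J : Finset (ZMod n)) : ℝ :=
  |((S ∩ J).card : ℝ) - (S.card : ℝ) * (J.card : ℝ) / n|

/-- An interval of `ZMod n` is the projection of an interval of `ℤ`. -/
def IsInterval (n : ℕ) (J : Finset (ZMod n)) : Prop :=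
  ∃ (a : ℤ) (len : ℕ), J = (Finset.range len).image (fun (i : ℕ) => ((a + (i : ℤ)) : ZMod n))

/-- The basic interval. -/
def Iv (n : ℕ) (a : ℤ) (len : ℕ) : Finset (ZMod n) :=
  (Finset.range len).image (fun (i : ℕ) => ((a + (i : ℤ)) : ZMod n))

lemma Iv_shift (n : ℕ) (a b : ℤ) (len : ℕ) :
    (Iv n a len).image (fun x => x + ((b : ℤ) : ZMod n)) = Iv n (a + b) len := by
  unfold Iv
  rw [Finset.image_image]
  apply Finset.image_congr
  intro i _
  simp only [Function.comp_apply]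
  push_cast
  ring

lemma Iv_succ_sdiff (n : ℕ) (a : ℤ) (len : ℕ) :
    Iv n (a + 1) len \ Iv n a len ⊆ {((a + len : ℤ) : ZMod n)} := by
  intro x hx
  simp only [Iv, Finset.mem_sdiff, Finset.mem_image, Finset.mem_range,
    Finset.mem_singleton] at hx ⊢
  obtain ⟨⟨i, hi, rfl⟩, h2⟩ := hx
  by_cases hlt : i + 1 < len
  · exact absurd ⟨i + 1, hlt, by push_cast; ring⟩ h2
  · have hl : a + 1 + (i : ℤ) = a + (len : ℤ) := by omega
    exact_mod_cast congrArg (fun z : ℤ => ((z : ZMod n))) hl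

lemma Iv_sdiff_succ (n : ℕ) (a : ℤ) (len : ℕ) :
    Iv n a len \ Iv n (a + 1) len ⊆ {((a : ℤ) : ZMod n)} := by
  intro x hx
  simp only [Iv, Finset.mem_sdiff, Finset.mem_image, Finset.mem_range,
    Finset.mem_singleton] at hx ⊢
  obtain ⟨⟨i, hi, rfl⟩, h2⟩ := hx
  rcases Nat.eq_zero_or_pos i with h0 | h0
  · simp [h0]
  · refine absurd ⟨i - 1, by omega, ?_⟩ h2
    have hl : a + 1 + ((i - 1 : ℕ) : ℤ) = a + (i : ℤ) := by omega
    exact_mod_cast congrArg (fun z : ℤ => ((z : ZMod n))) hl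

lemma card_inter_le_of_sdiff (S A B : Finset (ZMod n)) (t : ZMod n)
    (hBA : B \ A ⊆ {t}) : (S ∩ B).card ≤ (S ∩ A).card + 1 := by
  have hsub : S ∩ B ⊆ (S ∩ A) ∪ (B \ A) := by
    intro x hx
    rw [Finset.mem_inter] at hx
    by_cases hA : x ∈ A
    · exact Finset.mem_union_left _ (Finset.mem_inter.2 ⟨hx.1, hA⟩)
    · exact Finset.mem_union_right _ (Finset.mem_sdiff.2 ⟨hx.2, hA⟩)
  calc (S ∩ B).card ≤ ((S ∩ A) ∪ (B \ A)).card := Finset.card_le_card hsub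
    _ ≤ (S ∩ A).card + (B \ A).card := Finset.card_union_le _ _
    _ ≤ (S ∩ A).card + 1 := by
        have := Finset.card_le_card hBA
        simp only [Finset.card_singleton] at this
        omega

lemma neighbor_card (n : ℕ) (S : Finset (ZMod n)) (a : ℤ) (len : ℕ) :
    |((S ∩ Iv n (a + 1) len).card : ℝ) - ((S ∩ Iv n a len).card : ℝ)| ≤ 1 := by
  have h1 := card_inter_le_of_sdiff S (Iv n a len) (Iv n (a + 1) len) _
    (Iv_succ_sdiff n a len)
  have h2 := card_inter_le_of_sdiff S (Iv n (a + 1) len) (Iv n a len) _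
    (Iv_sdiff_succ n a len)
  rw [abs_le]
  constructor <;> [skip; skip] <;>
  · push_cast
    have h1' : ((S ∩ Iv n (a + 1) len).card : ℝ) ≤ (S ∩ Iv n a len).card + 1 := by
      exact_mod_cast h1
    have h2' : ((S ∩ Iv n a len).card : ℝ) ≤ (S ∩ Iv n (a + 1) len).card + 1 := by
      exact_mod_cast h2
    linarith

theorem balance_of_translation (n : ℕ) [NeZero n] (S : Finset (ZMod n)) (ε : ℝ)
    (hε : 0 < ε) (hε1 : ε ≤ 1)
    (h : ∀ J : Finset (ZMod n), IsInterval n J →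
      ∑ k : ZMod n, (((S ∩ J.image (· + k)).card : ℝ) - (S.card : ℝ) * J.card / n) ^ 2
        < ε * (n : ℝ) ^ 3) :
    ∀ J : Finset (ZMod n), IsInterval n J → disc n S J < 2 * ε ^ ((1 : ℝ) / 3) * n := by
  intro J hJ
  obtain ⟨a, len, rfl⟩ := hJ
  set J : Finset (ZMod n) := Iv n a len with hJdef
  have hn : (0 : ℝ) < n := by
    exact_mod_cast Nat.pos_of_ne_zero (NeZero.ne n)
  -- The shifted count function
  set c : ℝ := (S.card : ℝ) * (J.card : ℝ) / n with hc
  set G : ℕ → ℝ := fun v => ((S ∩ Iv n (a + v) len).card : ℝ) - c with hG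
  set d : ℝ := disc n S J with hd
  have hd0 : 0 ≤ d := abs_nonneg _
  -- d = |G 0|
  have hG0 : |G 0| = d := by
    simp only [hG, hd, disc]
    norm_num [hJdef]
    simp only [hc, hJdef]
  -- Lipschitz
  have hlip : ∀ v : ℕ, |G (v + 1) - G v| ≤ 1 := by
    intro v
    have := neighbor_card n S (a + v) len
    simp only [hG]
    rw [show a + ((v : ℕ) + 1 : ℕ) = (a + v) + 1 by push_cast; ring]
    convert this using 2
    ring
  have hlipn : ∀ v : ℕ, |G v - G 0| ≤ v := by
    intro v
    induction v with
    | zero => simp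
    | succ k ih =>
        have := hlip k
        calc |G (k + 1) - G 0| ≤ |G (k + 1) - G k| + |G k - G 0| := abs_sub_le _ _ _
          _ ≤ 1 + k := by linarith
          _ = ((k + 1 : ℕ) : ℝ) := by push_cast; ring
  -- lower bound on |G v|
  have hGlb : ∀ v : ℕ, d - v ≤ |G v| := by
    intro v
    have h1 := abs_sub_abs_le_abs_sub (G 0) (G v)
    rw [hG0] at h1
    have h2 := hlipn v
    rw [abs_sub_comm] at h2
    linarith
  -- the max function
  set m : ℕ → ℝ := fun v => max (d - v) 0 with hm
  have hmsq : ∀ v : ℕ, (m v) ^ 2 ≤ (G v) ^ 2 := by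
    intro v
    rcases le_or_gt (d - v) 0 with hle | hlt
    · simp only [hm]
      rw [max_eq_right hle]
      nlinarith [sq_nonneg (G v)]
    · simp only [hm]
      rw [max_eq_left hlt.le]
      have h1 := hGlb v
      calc (d - v) ^ 2 ≤ |G v| ^ 2 := by
            apply pow_le_pow_left₀ hlt.le h1
        _ = (G v) ^ 2 := sq_abs _
  -- telescoping lower bound: d^3 ≤ 3 * Σ_{v<n} m v ^ 2
  have hdn : d ≤ n := by
    have h1 : ((S ∩ J).card : ℝ) ≤ n := by
      have := Finset.card_le_univ (S ∩ J)
      rw [ZMod.card] at this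
      exact_mod_cast this
    have h2 : 0 ≤ c := by positivity
    have h3 : c ≤ n := by
      rw [hc, div_le_iff₀ hn]
      have hS : (S.card : ℝ) ≤ n := by
        have := Finset.card_le_univ S
        rw [ZMod.card] at this
        exact_mod_cast this
      have hJc : (J.card : ℝ) ≤ n := by
        have := Finset.card_le_univ J
        rw [ZMod.card] at this
        exact_mod_cast this
      nlinarith [Nat.cast_nonneg (α := ℝ) S.card, Nat.cast_nonneg (α := ℝ) J.card]
    rw [hd, disc, ← hc, abs_le]
    have h4 : (0:ℝ) ≤ ((S ∩ J).card : ℝ) := Nat.cast_nonneg _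
    constructor <;> linarith
  have hstep : ∀ v : ℕ, (m v) ^ 3 - (m (v + 1)) ^ 3 ≤ 3 * (m v) ^ 2 := by
    intro v
    have h1 : 0 ≤ m (v + 1) := le_max_right _ _
    have h2 : m (v + 1) ≤ m v := by
      apply max_le_max _ le_rfl
      push_cast
      linarith
    have h3 : m v ≤ m (v + 1) + 1 := by
      rcases le_or_gt (d - v) 0 with hle | hlt
      · simp only [hm]
        rw [max_eq_right hle]
        linarith [le_max_right (d - ((v:ℕ)+1:ℕ) : ℝ) (0:ℝ)]
      · simp only [hm]
        rw [max_eq_left hlt.le]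
        have : d - ((v + 1 : ℕ) : ℝ) ≤ max (d - ((v+1:ℕ) : ℝ)) 0 := le_max_left _ _
        push_cast at this ⊢
        linarith [le_max_right (d - ((v:ℝ)+1)) (0:ℝ)]
    nlinarith [sq_nonneg (m v - m (v+1)), sq_nonneg (m v)]
  have htele : d ^ 3 ≤ ∑ v ∈ Finset.range n, 3 * (m v) ^ 2 := by
    have hsum := Finset.sum_range_sub' (fun v => (m v) ^ 3) n
    have hmn : m n = 0 := by
      simp only [hm]
      rw [max_eq_right]
      linarith
    have hm0 : m 0 = d := by
      simp only [hm, Nat.cast_zero, sub_zero]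
      exact max_eq_left hd0
    calc d ^ 3 = (m 0) ^ 3 - (m n) ^ 3 := by rw [hm0, hmn]; ring
      _ = ∑ v ∈ Finset.range n, ((m v) ^ 3 - (m (v + 1)) ^ 3) := hsum.symm
      _ ≤ ∑ v ∈ Finset.range n, 3 * (m v) ^ 2 :=
          Finset.sum_le_sum fun v _ => hstep v
  -- relate to the hypothesis sum
  have hkey := h J ⟨a, len, rfl⟩
  have hconv : ∑ k : ZMod n, (((S ∩ J.image (· + k)).card : ℝ) - (S.card : ℝ) * J.card / n) ^ 2
      = ∑ v ∈ Finset.range n, (G v) ^ 2 := by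
    apply Finset.sum_nbij' (fun k => (ZMod.val k : ℕ)) (fun v => ((v : ℕ) : ZMod n))
    · intro k _
      exact Finset.mem_range.2 (ZMod.val_lt k)
    · intro v _
      exact Finset.mem_univ _
    · intro k _
      exact ZMod.natCast_rightInverse k
    · intro v hv
      exact ZMod.val_cast_of_lt (Finset.mem_range.1 hv)
    · intro k _
      simp only [hG]
      congr 2
      · congr 1
        have : ((k.val : ℤ) : ZMod n) = k := by
          push_cast
          exact ZMod.natCast_rightInverse k
        rw [hJdef, show (fun x => x + k) = (fun x => x + ((k.val : ℤ) : ZMod n)) by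
          rw [this]]
        rw [Iv_shift]
  have hsum2 : ∑ v ∈ Finset.range n, (m v) ^ 2 ≤ ∑ v ∈ Finset.range n, (G v) ^ 2 :=
    Finset.sum_le_sum fun v _ => hmsq v
  have hfin : d ^ 3 < 3 * ε * n ^ 3 := by
    have := hconv ▸ hkey
    calc d ^ 3 ≤ ∑ v ∈ Finset.range n, 3 * (m v) ^ 2 := htele
      _ = 3 * ∑ v ∈ Finset.range n, (m v) ^ 2 := by rw [Finset.mul_sum]
      _ ≤ 3 * ∑ v ∈ Finset.range n, (G v) ^ 2 := by linarith
      _ < 3 * (ε * n ^ 3) := by linarith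
      _ = 3 * ε * n ^ 3 := by ring
  -- conclude
  have hcube : (2 * ε ^ ((1 : ℝ) / 3) * n) ^ 3 = 8 * ε * n ^ 3 := by
    have : (ε ^ ((1 : ℝ) / 3)) ^ 3 = ε := by
      rw [← Real.rpow_natCast (ε ^ ((1 : ℝ) / 3)) 3, ← Real.rpow_mul hε.le]
      norm_num
    rw [mul_pow, mul_pow, this]
    norm_num
  have : d ^ 3 < (2 * ε ^ ((1 : ℝ) / 3) * n) ^ 3 := by
    rw [hcube]
    nlinarith [pow_pos hn 3]
  exact lt_of_pow_lt_pow_left₀ 3 (by positivity) this
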